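/- Let α ∈ [0,1], β = √(1−α²), and consider the two-qubit matrix ρ̃ = (1/4)·(I₄ + (2/3)(2α²−1)(σ₃⊗I₂ + I₂⊗σ₃) + (4/9)·(2αβ·σ₁⊗σ₁ − 2αβ·σ₂⊗σ₂ + σ₃⊗σ₃)). Then ρ̃^{T₂} fails to be positive semidefinite (equivalently, ρ̃ is entangled) if and only if (8−√39)/16 < α² < (8+√39)/16. This is the range for broadcasting of entanglement of the pure state α|00⟩+β|11⟩ via local optimal cloning. -/

import Mathlib

open Matrix Kronecker
open scoped ComplexOrder

/-- The three Pauli matrices. -/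
noncomputable def pauli : Fin 3 → Matrix (Fin 2) (Fin 2) ℂ :=
  ![!![0, 1; 1, 0], !![0, -Complex.I; Complex.I, 0], !![1, 0; 0, -1]]

/-- Partial transpose on the second qubit:
`(ρ^{T₂})_{(i,μ),(j,ν)} = ρ_{(i,ν),(j,μ)}`. -/
noncomputable def ptranspose (ρ : Matrix (Fin 2 × Fin 2) (Fin 2 × Fin 2) ℂ) :
    Matrix (Fin 2 × Fin 2) (Fin 2 × Fin 2) ℂ :=
  Matrix.of fun p q => ρ (p.1, q.2) (q.1, p.2)

/-- Auxiliary explicit 4×4 matrix. -/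
noncomputable def entr (a b c d : ℝ) : Matrix (Fin 2 × Fin 2) (Fin 2 × Fin 2) ℂ :=
  Matrix.of fun p q =>
    if p = (0,0) ∧ q = (0,0) then (a:ℂ)
    else if p = (1,1) ∧ q = (1,1) then (b:ℂ)
    else if p = (0,1) ∧ q = (0,1) then (d:ℂ)
    else if p = (1,0) ∧ q = (1,0) then (d:ℂ)
    else if p = (0,1) ∧ q = (1,0) then (c:ℂ)
    else if p = (1,0) ∧ q = (0,1) then (c:ℂ)
    else 0

lemma entr_herm (a b c d : ℝ) : (entr a b c d).IsHermitian := by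
  ext ⟨i,μ⟩ ⟨j,ν⟩
  fin_cases i <;> fin_cases μ <;> fin_cases j <;> fin_cases ν <;>
    simp [entr, Matrix.conjTranspose_apply, Prod.ext_iff]

lemma entr_qf (a b c d : ℝ) (x : Fin 2 × Fin 2 → ℂ) :
    star x ⬝ᵥ (entr a b c d) *ᵥ x =
      ((a * Complex.normSq (x (0,0)) + b * Complex.normSq (x (1,1))
        + (d - c) * (Complex.normSq (x (0,1)) + Complex.normSq (x (1,0)))
        + c * Complex.normSq (x (0,1) + x (1,0)) : ℝ) : ℂ) := by
  simp only [dotProduct, Matrix.mulVec, Fintype.sum_prod_type, Fin.sum_univ_two,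
    Pi.star_apply, RCLike.star_def, entr, Matrix.of_apply]
  norm_num [Prod.ext_iff]
  simp [Complex.ext_iff, Complex.normSq_apply, Complex.add_re, Complex.add_im,
    Complex.mul_re, Complex.mul_im]
  constructor <;> ring

lemma ptranspose_eq_entr (α : ℝ) :
    ptranspose ((1/4 : ℂ) • ((1 : Matrix (Fin 2 × Fin 2) (Fin 2 × Fin 2) ℂ)
        + ((2/3 * (2*α^2 - 1) : ℝ) : ℂ) • (pauli 2 ⊗ₖ 1 + 1 ⊗ₖ pauli 2)
        + (4/9 : ℂ) • (((2 * α * Real.sqrt (1 - α^2) : ℝ) : ℂ) • (pauli 0 ⊗ₖ pauli 0)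
            - ((2 * α * Real.sqrt (1 - α^2) : ℝ) : ℂ) • (pauli 1 ⊗ₖ pauli 1)
            + pauli 2 ⊗ₖ pauli 2)))
    = entr (1/36 + 2/3*α^2) (25/36 - 2/3*α^2) (4/9 * (α * Real.sqrt (1 - α^2))) (5/36) := by
  ext ⟨i,μ⟩ ⟨j,ν⟩
  fin_cases i <;> fin_cases μ <;> fin_cases j <;> fin_cases ν <;>
  · simp only [ptranspose, Matrix.of_apply, Matrix.smul_apply, Matrix.add_apply,
      Matrix.sub_apply, Matrix.kroneckerMap_apply, Matrix.one_apply, pauli,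
      Matrix.cons_val_zero, Matrix.cons_val_one, Matrix.head_cons, Matrix.cons_val',
      Matrix.head_fin_const, Matrix.empty_val', Matrix.cons_val_fin_one, Fin.isValue, entr]
    norm_num [Complex.ext_iff, Prod.ext_iff, ← Complex.ofReal_pow]
    all_goals first | ring1 | (simp <;> ring1)

/-- Broadcasting range of the pure state `α|00⟩ + β|11⟩` via local optimal
cloning.  The nonlocal output `ρ̃₁₄ = {(2/3)x, (2/3)x, (4/9)T}` of the Buzek–Hillery local
optimal cloner has non-positive-semidefinite partial transpose (i.e. is entangled) iff
`(8−√39)/16 < α² < (8+√39)/16`. -/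
theorem pure_state_broadcasting_range_local (α : ℝ) (hα0 : 0 ≤ α) (hα1 : α ≤ 1) :
    ¬ (ptranspose ((1/4 : ℂ) • ((1 : Matrix (Fin 2 × Fin 2) (Fin 2 × Fin 2) ℂ)
        + ((2/3 * (2*α^2 - 1) : ℝ) : ℂ) • (pauli 2 ⊗ₖ 1 + 1 ⊗ₖ pauli 2)
        + (4/9 : ℂ) • (((2 * α * Real.sqrt (1 - α^2) : ℝ) : ℂ) • (pauli 0 ⊗ₖ pauli 0)
            - ((2 * α * Real.sqrt (1 - α^2) : ℝ) : ℂ) • (pauli 1 ⊗ₖ pauli 1)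
            + pauli 2 ⊗ₖ pauli 2)))).PosSemidef
    ↔ ((8 - Real.sqrt 39) / 16 < α^2 ∧ α^2 < (8 + Real.sqrt 39) / 16) := by

  rw [ptranspose_eq_entr]
  set β := Real.sqrt (1 - α^2) with hβdef
  have hβ0 : 0 ≤ β := Real.sqrt_nonneg _
  have hβ2 : β^2 = 1 - α^2 := Real.sq_sqrt (by nlinarith)
  have h39 : Real.sqrt 39 * Real.sqrt 39 = 39 := Real.mul_self_sqrt (by norm_num)
  have hs39 : 0 ≤ Real.sqrt 39 := Real.sqrt_nonneg _
  constructor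
  · -- contrapositive: ¬cond → PSD
    intro hnps
    by_contra hcond
    apply hnps
    -- from ¬cond deduce α*β ≤ 5/16
    have hab : α * β ≤ 5/16 := by
      rcases not_and_or.mp hcond with h | h
      · push_neg at h
        nlinarith [mul_nonneg hα0 hβ0, sq_nonneg (α*β - 5/16), sq_nonneg α]
      · push_neg at h
        nlinarith [mul_nonneg hα0 hβ0, sq_nonneg (α*β - 5/16), sq_nonneg (1 - α^2)]
    refine Matrix.PosSemidef.of_dotProduct_mulVec_nonneg (entr_herm _ _ _ _) fun x => ?_
    rw [entr_qf]
    rw [Complex.zero_le_real]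
    have n0 := Complex.normSq_nonneg (x (0,0))
    have n1 := Complex.normSq_nonneg (x (0,1))
    have n2 := Complex.normSq_nonneg (x (1,0))
    have n3 := Complex.normSq_nonneg (x (1,1))
    have n4 := Complex.normSq_nonneg (x (0,1) + x (1,0))
    have hc0 : 0 ≤ 4/9 * (α*β) := by positivity
    nlinarith [mul_nonneg hc0 n4, sq_nonneg α, mul_nonneg (mul_nonneg hα0 hα0) n0,
      mul_nonneg (sq_nonneg α) n3]
  · rintro ⟨hr1, hr2⟩ hPSD
    -- α*β > 5/16
    have hab : 5/16 < α * β := by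
      nlinarith [mul_nonneg hα0 hβ0, sq_nonneg (α*β - 5/16), sq_nonneg (α*β + 5/16)]
    set x : Fin 2 × Fin 2 → ℂ := fun p => if p = (0,1) then 1 else if p = (1,0) then -1 else 0
      with hx
    have h2 := hPSD.dotProduct_mulVec_nonneg x
    rw [entr_qf] at h2
    simp only [hx, Prod.ext_iff] at h2
    norm_num at h2
    rw [show ((5/36 - 4/9*((α:ℂ) * (β:ℂ))) * 2 : ℂ) = (((5/36 - 4/9*(α*β)) * 2 : ℝ) : ℂ) by
      push_cast; ring, Complex.zero_le_real] at h2
    nlinarith
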